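/- Suppose F, F̃ ∈ ℝᵈ (d ≥ 3) have all entries nonzero with F₀, F̃₀ > 0, and Ψ, Ψ̃ are diagonal nonnegative d×d matrices, such that F Fᵀ + Ψ = F̃ F̃ᵀ + Ψ̃ as matrices. Then F = F̃ and Ψ = Ψ̃. -/
import Mathlib


/-- Identifiability of the factor analysis covariance decomposition FFᵀ + Ψ. -/
theorem factor_analysis_identified
    (d : ℕ) (hd : 3 ≤ d)
    (F F' : Fin d → ℝ)
    (hF : ∀ i, F i ≠ 0) (hF' : ∀ i, F' i ≠ 0)
    (hF0 : 0 < F ⟨0, by omega⟩) (hF'0 : 0 < F' ⟨0, by omega⟩)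
    (Ψ Ψ' : Matrix (Fin d) (Fin d) ℝ)
    (hΨdiag : ∀ i j, i ≠ j → Ψ i j = 0) (hΨ'diag : ∀ i j, i ≠ j → Ψ' i j = 0)
    (hΨpos : ∀ i, 0 ≤ Ψ i i) (hΨ'pos : ∀ i, 0 ≤ Ψ' i i)
    (heq : ∀ i j, F i * F j + Ψ i j = F' i * F' j + Ψ' i j) :
    F = F' ∧ Ψ = Ψ' := by
  set i0 : Fin d := ⟨0, by omega⟩ with hi0
  set i1 : Fin d := ⟨1, by omega⟩ with hi1
  set i2 : Fin d := ⟨2, by omega⟩ with hi2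
  have hoff : ∀ i j : Fin d, i ≠ j → F i * F j = F' i * F' j := by
    intro i j hij
    have := heq i j
    rw [hΨdiag i j hij, hΨ'diag i j hij] at this
    linarith
  have hsq : ∀ i : Fin d, (F i)^2 = (F' i)^2 := by
    intro i
    set j : Fin d := if i = i0 then i1 else i0 with hj
    set k : Fin d := if i = i2 then i1 else i2 with hk
    have h01 : i0 ≠ i1 := by simp [hi0, hi1, Fin.ext_iff]
    have h02 : i0 ≠ i2 := by simp [hi0, hi2, Fin.ext_iff]
    have h12 : i1 ≠ i2 := by simp [hi1, hi2, Fin.ext_iff]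
    have hij : i ≠ j := by
      rw [hj]; split
      · rename_i h; rw [h]; exact h01
      · rename_i h; exact h
    have hik : i ≠ k := by
      rw [hk]; split
      · rename_i h; rw [h]; exact h12.symm
      · rename_i h; exact h
    have hjk : j ≠ k := by
      rw [hj, hk]
      rcases eq_or_ne i i0 with h0 | h0 <;> rcases eq_or_ne i i2 with h2 | h2
      · exact absurd (h0.symm.trans h2) h02
      · rw [if_pos h0, if_neg h2]; exact h12
      · rw [if_neg h0, if_pos h2]; exact h01
      · rw [if_neg h0, if_neg h2]; exact h02
    have e1 := hoff i j hij
    have e2 := hoff i k hik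
    have e3 := hoff j k hjk
    have hjk0 : F j * F k ≠ 0 := mul_ne_zero (hF j) (hF k)
    have key : (F i)^2 * (F j * F k) = (F' i)^2 * (F j * F k) := by
      calc (F i)^2 * (F j * F k) = (F i * F j) * (F i * F k) := by ring
        _ = (F' i * F' j) * (F' i * F' k) := by rw [e1, e2]
        _ = (F' i)^2 * (F' j * F' k) := by ring
        _ = (F' i)^2 * (F j * F k) := by rw [e3]
    exact mul_right_cancel₀ hjk0 key
  have hF0eq : F i0 = F' i0 := by
    have := hsq i0
    nlinarith [hF0, hF'0]
  have hFeq : F = F' := by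
    funext i
    by_cases h : i = i0
    · rw [h]; exact hF0eq
    · have := hoff i0 i (fun hh => h hh.symm)
      rw [hF0eq] at this
      exact mul_left_cancel₀ (ne_of_gt hF'0) this
  refine ⟨hFeq, ?_⟩
  funext i j
  by_cases h : i = j
  · subst h
    have := heq i i
    rw [hFeq] at this
    linarith
  · rw [hΨdiag i j h, hΨ'diag i j h]
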